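/- Let p be a prime, q = p^f, V = F_q^n, and let g ∈ GL_n(q) be an element whose order divides q^e − 1 and is coprime to q^i − 1 for all 1 ≤ i < e. Then dim C_V(g) ≡ dim V (mod e), where C_V(g) is the fixed subspace (1-eigenspace) of g. -/

import Mathlib

open Module LinearMap

/-- Restrict a linear automorphism to an invariant submodule. -/
private def resEquiv {F : Type*} [Field F] {V : Type*} [AddCommGroup V] [Module F V]
    (g : V ≃ₗ[F] V) (S : Submodule F V) (h1 : ∀ v ∈ S, g v ∈ S)
    (h2 : ∀ v ∈ S, g.symm v ∈ S) : S ≃ₗ[F] S :=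
  LinearEquiv.ofLinear ((g : V →ₗ[F] V).restrict h1) ((g.symm : V →ₗ[F] V).restrict h2)
    (by ext x; simp [LinearMap.restrict_apply])
    (by ext x; simp [LinearMap.restrict_apply])

private lemma resEquiv_coe {F : Type*} [Field F] {V : Type*} [AddCommGroup V] [Module F V]
    (g : V ≃ₗ[F] V) (S : Submodule F V) (h1 : ∀ v ∈ S, g v ∈ S)
    (h2 : ∀ v ∈ S, g.symm v ∈ S) (x : S) : (resEquiv g S h1 h2 x : V) = g x := rfl

private lemma resEquiv_pow_coe {F : Type*} [Field F] {V : Type*} [AddCommGroup V] [Module F V]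
    (g : V ≃ₗ[F] V) (S : Submodule F V) (h1 : ∀ v ∈ S, g v ∈ S)
    (h2 : ∀ v ∈ S, g.symm v ∈ S) (m : ℕ) (x : S) :
    ((resEquiv g S h1 h2 ^ m) x : V) = (g ^ m) (x : V) := by
  induction m generalizing x with
  | zero => simp
  | succ m ih =>
    rw [pow_succ, pow_succ]
    show (((resEquiv g S h1 h2 ^ m) (resEquiv g S h1 h2 x) : S) : V) = (g ^ m) (g (x : V))
    rw [ih ((resEquiv g S h1 h2) x), resEquiv_coe]

universe u

private lemma key_aux (p f e : ℕ) (hp : p.Prime) (hf : 0 < f) (he : 0 < e)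
    (F : Type*) [Field F] [Fintype F] (hq : Fintype.card F = p ^ f) :
    ∀ (d : ℕ) (V : Type u) [AddCommGroup V] [Module F V] [FiniteDimensional F V]
      (g : V ≃ₗ[F] V), orderOf g = d → orderOf g ∣ Fintype.card F ^ e - 1 →
      (∀ i : ℕ, 1 ≤ i → i < e → Nat.Coprime (orderOf g) (Fintype.card F ^ i - 1)) →
      Module.finrank F (LinearMap.ker ((g : V →ₗ[F] V) - LinearMap.id)) ≡
        Module.finrank F V [MOD e] := by
  intro d
  induction d using Nat.strong_induction_on with
  | _ d IH =>
  intro V _ _ _ g hd hdvd hcop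
  set q := Fintype.card F with hqdef
  have hq2 : 1 < q := by
    rw [show q = p ^ f from hq]; exact Nat.one_lt_pow hf.ne' hp.one_lt
  have hqe1 : 1 < q ^ e := Nat.one_lt_pow he.ne' hq2
  have hdpos : 0 < d := by
    rw [← hd]; exact Nat.pos_of_dvd_of_pos hdvd (by omega)
  -- base case
  rcases eq_or_lt_of_le (show 1 ≤ d from hdpos) with h1 | hd1
  · have hg1 : g = 1 := orderOf_eq_one_iff.mp (hd.trans h1.symm)
    subst hg1
    have : ((1 : V ≃ₗ[F] V) : V →ₗ[F] V) - LinearMap.id = 0 := by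
      ext v; simp
    rw [this, LinearMap.ker_zero, finrank_top]
  -- main case: 1 < d
  have hd1' : 1 < d := hd1
  set r := d.minFac with hrdef
  have hr : r.Prime := Nat.minFac_prime (by omega)
  have hrd : r ∣ d := Nat.minFac_dvd d
  set k := d / r with hkdef
  have hkr : k * r = d := Nat.div_mul_cancel hrd
  have hkpos : 0 < k := by
    rcases Nat.eq_zero_or_pos k with h | h
    · rw [h, zero_mul] at hkr; omega
    · exact h
  have hklt : k < d := Nat.div_lt_self hdpos hr.one_lt
  set h := g ^ k with hhdef
  have hhr : h ^ r = 1 := by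
    rw [hhdef, ← pow_mul, hkr, ← hd, pow_orderOf_eq_one]
  set a : V →ₗ[F] V := (h : V →ₗ[F] V) with hadef
  have har : a ^ r = 1 := by
    ext v
    have h1 : (h ^ r) v = v := by rw [hhr]; rfl
    rw [LinearEquiv.pow_apply] at h1
    simpa [hadef, Module.End.pow_apply] using h1
  set U := LinearMap.ker (a - 1) with hUdef
  set W := LinearMap.range (a - 1) with hWdef
  have hU_mem : ∀ v, v ∈ U ↔ h v = v := by
    intro v
    simp [hUdef, LinearMap.mem_ker, sub_eq_zero, hadef]
  have hW_mem : ∀ v, v ∈ W ↔ ∃ u, h u - u = v := by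
    intro v
    simp [hWdef, LinearMap.mem_range, hadef]
  -- (r : F) ≠ 0
  have hrp : r ≠ p := by
    intro hrp
    have h1 : p ∣ q ^ e - 1 := hrp ▸ (hrd.trans (hd ▸ hdvd))
    have h2 : p ∣ q ^ e := by
      rw [show q = p ^ f from hq, ← pow_mul]
      exact dvd_pow_self p (by positivity)
    have := Nat.dvd_sub h2 h1
    rw [Nat.sub_sub_self (by omega)] at this
    exact hp.ne_one (Nat.dvd_one.mp this)
  have hrF : (r : F) ≠ 0 := by
    intro h0
    have hc : CharP F (ringChar F) := ringChar.charP F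
    have hcprime : (ringChar F).Prime := CharP.char_is_prime F (ringChar F)
    have hcard : ((Fintype.card F : F)) = 0 := FiniteField.cast_card_eq_zero F
    rw [show (Fintype.card F) = p ^ f from hq] at hcard
    push_cast at hcard
    have hcp : ringChar F ∣ p := by
      have := pow_eq_zero_iff (n := f) hf.ne' |>.mp hcard
      exact (CharP.cast_eq_zero_iff F (ringChar F) p).mp this
    have hcpeq : ringChar F = p := (Nat.prime_dvd_prime_iff_eq hcprime hp).mp hcp
    have : ringChar F ∣ r := (CharP.cast_eq_zero_iff F (ringChar F) r).mp h0
    rw [hcpeq] at this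
    exact hrp ((Nat.prime_dvd_prime_iff_eq hp hr).mp this).symm
  -- U ⊓ W = 0
  have hUW : ∀ v, v ∈ U → v ∈ W → v = 0 := by
    intro v hvU hvW
    obtain ⟨u, hu⟩ := hvW
    have hgeom : ((∑ i ∈ Finset.range r, a ^ i) * (a - 1)) = a ^ r - 1 := geom_sum_mul a r
    have h2 : (∑ i ∈ Finset.range r, a ^ i) v = 0 := by
      rw [← hu, ← Module.End.mul_apply, hgeom, har, sub_self, LinearMap.zero_apply]
    have hav : a v = v := by
      have := (hU_mem v).mp hvU
      simpa [hadef] using this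
    have h3 : (∑ i ∈ Finset.range r, a ^ i) v = (r : F) • v := by
      rw [LinearMap.sum_apply]
      have : ∀ i, (a ^ i) v = v := by
        intro i
        rw [Module.End.pow_apply]
        exact Function.iterate_fixed hav i
      simp [this, Finset.sum_const, Nat.cast_smul_eq_nsmul]
    rw [h3] at h2
    rcases smul_eq_zero.mp h2 with h4 | h4
    · exact absurd h4 hrF
    · exact h4
  -- invariance of U under g and g.symm
  have hcomm : ∀ v, h (g v) = g (h v) := by
    intro v
    have : h * g = g * h := ((Commute.refl g).pow_left k)
    exact congrArg (fun (e : V ≃ₗ[F] V) => e v) this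
  have hcomm' : ∀ v, h (g.symm v) = g.symm (h v) := by
    intro v
    have hc : h * g⁻¹ = g⁻¹ * h := (((Commute.refl g).pow_left k).inv_right)
    have := congrArg (fun (e : V ≃ₗ[F] V) => e v) hc
    simpa using this
  have hgU1 : ∀ v ∈ U, g v ∈ U := by
    intro v hv
    rw [hU_mem] at hv ⊢
    rw [hcomm, hv]
  have hgU2 : ∀ v ∈ U, g.symm v ∈ U := by
    intro v hv
    rw [hU_mem] at hv ⊢
    rw [hcomm', hv]
  set gU := resEquiv g U hgU1 hgU2 with hgUdef
  have hgUk : gU ^ k = 1 := by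
    refine LinearEquiv.ext fun x => Subtype.ext ?_
    rw [resEquiv_pow_coe]
    have : (g ^ k) (x : V) = h (x : V) := rfl
    rw [this, (hU_mem _).mp x.2]
    rfl
  have hordU : orderOf gU ∣ k := orderOf_dvd_of_pow_eq_one hgUk
  have hordUd : orderOf gU ∣ d := hordU.trans ⟨r, hkr.symm⟩
  have hordUlt : orderOf gU < d := lt_of_le_of_lt (Nat.le_of_dvd hkpos hordU) hklt
  have hIH := IH (orderOf gU) hordUlt U gU rfl
    (hordUd.trans (hd ▸ hdvd))
    (fun i h1 h2 => Nat.Coprime.coprime_dvd_left (hd ▸ hordUd) (hcop i h1 h2))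
  -- identify the kernel
  set K := LinearMap.ker ((g : V →ₗ[F] V) - LinearMap.id) with hKdef
  have hKU : K ≤ U := by
    intro v hv
    have hgv : g v = v := by
      have hv' := LinearMap.mem_ker.mp hv
      simpa [sub_eq_zero] using hv'
    rw [hU_mem]
    show (g ^ k) v = v
    rw [LinearEquiv.pow_apply]
    exact Function.iterate_fixed hgv k
  have hker_eq : LinearMap.ker ((gU : U →ₗ[F] U) - LinearMap.id) = K.comap U.subtype := by
    ext x
    simp only [LinearMap.mem_ker, LinearMap.sub_apply, LinearMap.id_apply,
      Submodule.mem_comap, hKdef, sub_eq_zero, LinearEquiv.coe_coe, Submodule.coe_subtype]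
    constructor
    · intro hx
      have := congrArg (Subtype.val) hx
      rw [resEquiv_coe] at this
      rw [this]
    · intro hx
      exact Subtype.ext (by rw [resEquiv_coe]; exact hx)
  have hfr1 : Module.finrank F (LinearMap.ker ((gU : U →ₗ[F] U) - LinearMap.id))
      = Module.finrank F K := by
    rw [hker_eq]
    exact (Submodule.comapSubtypeEquivOfLe hKU).finrank_eq
  -- invariance of W under h and h.symm
  have hWh1 : ∀ v ∈ W, h v ∈ W := by
    intro v hv
    rw [hW_mem] at hv ⊢
    obtain ⟨u, hu⟩ := hv
    exact ⟨h u, by rw [← hu, map_sub]⟩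
  have hWh2 : ∀ v ∈ W, h.symm v ∈ W := by
    intro v hv
    rw [hW_mem] at hv ⊢
    obtain ⟨u, hu⟩ := hv
    refine ⟨h.symm u, ?_⟩
    rw [← hu, map_sub, LinearEquiv.apply_symm_apply, LinearEquiv.symm_apply_apply]
  set hW := resEquiv h W hWh1 hWh2 with hWdef2
  have hWr : hW ^ r = 1 := by
    refine LinearEquiv.ext fun x => Subtype.ext ?_
    rw [resEquiv_pow_coe, hhr]
    rfl
  -- finiteness
  have hVfin : Finite V := Module.finite_of_finite F
  -- the p-group
  set G := Subgroup.zpowers hW with hGdef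
  have hG : IsPGroup r G := by
    intro x
    refine ⟨1, ?_⟩
    obtain ⟨j, hj⟩ := Subgroup.mem_zpowers_iff.mp x.2
    refine Subtype.ext ?_
    show ((x : W ≃ₗ[F] W)) ^ (r ^ 1) = 1
    rw [← hj, pow_one, ← zpow_natCast (hW ^ j), ← zpow_mul, mul_comm, zpow_mul,
      zpow_natCast, hWr, one_zpow]
  have hfix : MulAction.fixedPoints G W = ({0} : Set W) := by
    ext x
    simp only [MulAction.mem_fixedPoints, Set.mem_singleton_iff]
    constructor
    · intro hx
      have h1 := hx ⟨hW, Subgroup.mem_zpowers hW⟩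
      have h2 : hW x = x := h1
      have h3 : h (x : V) = (x : V) := by
        have := congrArg Subtype.val h2
        rwa [resEquiv_coe] at this
      exact Subtype.ext (hUW _ ((hU_mem _).mpr h3) x.2)
    · rintro rfl γ
      exact smul_zero γ
  haveI : Fact r.Prime := ⟨hr⟩
  have hmod := hG.card_modEq_card_fixedPoints W
  rw [hfix] at hmod
  have hcard1 : Nat.card (({0} : Set W)) = 1 := by simp
  rw [hcard1] at hmod
  letI : Fintype W := Fintype.ofFinite W
  have hcardW : Nat.card W = q ^ Module.finrank F W := by
    rw [Nat.card_eq_fintype_card]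
    exact card_eq_pow_finrank
  rw [hcardW] at hmod
  -- hmod : q ^ finrank W ≡ 1 [MOD r] ; deduce e ∣ finrank W
  set m := Module.finrank F W with hmdef
  have hrqm : r ∣ q ^ m - 1 := (Nat.modEq_iff_dvd' (Nat.one_le_pow _ _ (by omega))).mp hmod.symm
  have hem : e ∣ m := by
    have hrqe : r ∣ q ^ e - 1 := hrd.trans (hd ▸ hdvd)
    have h1 : (1 : ℕ) ≡ q ^ e [MOD r] := (Nat.modEq_iff_dvd' (by omega)).mpr hrqe
    set t := m % e with htdef
    have ht : q ^ t ≡ 1 [MOD r] := by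
      have h2 : (1 : ℕ) ≡ (q ^ e) ^ (m / e) [MOD r] := by
        simpa using h1.pow (m / e)
      have h3 : q ^ t ≡ (q ^ e) ^ (m / e) * q ^ t [MOD r] := by
        conv_lhs => rw [← one_mul (q ^ t)]
        exact h2.mul_right _
      have h4 : (q ^ e) ^ (m / e) * q ^ t = q ^ m := by
        rw [← pow_mul, ← pow_add]
        congr 1
        rw [htdef]
        exact Nat.div_add_mod m e
      rw [h4] at h3
      exact h3.trans ((Nat.modEq_iff_dvd' (Nat.one_le_pow _ _ (by omega))).mpr hrqm).symm
    rcases Nat.eq_zero_or_pos t with h0 | hpos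
    · exact Nat.dvd_of_mod_eq_zero h0
    · exfalso
      have htlt : t < e := Nat.mod_lt _ he
      have hrt : r ∣ q ^ t - 1 :=
        (Nat.modEq_iff_dvd' (Nat.one_le_pow _ _ (by omega))).mp ht.symm
      have hco := hcop t hpos htlt
      rw [hd] at hco
      have : r ∣ 1 := hco ▸ Nat.dvd_gcd hrd hrt
      exact hr.one_lt.ne' (Nat.dvd_one.mp this)
  -- rank-nullity and conclusion
  have hrn : Module.finrank F W + Module.finrank F U = Module.finrank F V :=
    LinearMap.finrank_range_add_finrank_ker (a - 1)
  have hUV : Module.finrank F U ≡ Module.finrank F V [MOD e] := by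
    have hle : Module.finrank F U ≤ Module.finrank F V := by
      rw [← hrn]; exact Nat.le_add_left _ _
    rw [Nat.modEq_iff_dvd' hle]
    have : Module.finrank F V - Module.finrank F U = m := by
      rw [← hrn, Nat.add_sub_cancel]
    rw [this]
    exact hem
  calc Module.finrank F K = Module.finrank F
        (LinearMap.ker ((gU : U →ₗ[F] U) - LinearMap.id)) := hfr1.symm
    _ ≡ Module.finrank F U [MOD e] := hIH
    _ ≡ Module.finrank F V [MOD e] := hUV

/-- Let `F` be a finite field with `q = p^f` elements and `V` an `n`-dimensional
`F`-vector space. If `g ∈ GL(V)` has order dividing `q^e - 1` and coprime to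
`q^i - 1` for all `1 ≤ i < e`, then `dim C_V(g) ≡ dim V (mod e)`, where `C_V(g)`
is the fixed subspace of `g`. -/
theorem fixed_space_dim_mod (p f n e : ℕ) (hp : p.Prime) (hf : 0 < f) (he : 0 < e)
    (F : Type*) [Field F] [Fintype F] (hq : Fintype.card F = p ^ f)
    (V : Type*) [AddCommGroup V] [Module F V] [FiniteDimensional F V]
    (hn : Module.finrank F V = n)
    (g : V ≃ₗ[F] V)
    (hdvd : orderOf g ∣ Fintype.card F ^ e - 1)
    (hcop : ∀ i : ℕ, 1 ≤ i → i < e → Nat.Coprime (orderOf g) (Fintype.card F ^ i - 1)) :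
    Module.finrank F (LinearMap.ker ((g : V →ₗ[F] V) - LinearMap.id)) ≡ n [MOD e] := by
  have := key_aux p f e hp hf he F hq (orderOf g) V g rfl hdvd hcop
  rwa [hn] at this
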